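/- Let n, k, d be integers with 1 ≤ k ≤ n and d ≥ 1. In the formal power series ring over ℤ, the coefficient of H^n in (1+H)^(n−1) · (dH)^k · (1+dH)^(−k) equals (−1)^(n−k) · C(n−1, k−1) · d^k · (d−1)^(n−k). -/

import Mathlib

open PowerSeries Finset

private lemma choose_aux (m K i : ℕ) (hi : i ≤ m) :
    (m + K).choose i * (m - i + K).choose K = (m + K).choose K * m.choose i := by
  have h1 : (m + K).choose i = (m + K).choose (m - i + K) := by
    rw [show m - i + K = m + K - i by omega, Nat.choose_symm (by omega)]
  rw [h1, Nat.choose_mul (n := m + K) (k := m - i + K) (s := K) (by omega),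
    show m - i + K - K = m - i by omega, show m + K - K = m by omega,
    Nat.choose_symm hi]

private lemma coeff_geom_pow (a : ℤ) (k m : ℕ) :
    PowerSeries.coeff (R := ℤ) m ((PowerSeries.mk fun s => a ^ s) ^ (k + 1))
      = a ^ m * (m + k).choose k := by
  induction k generalizing m with
  | zero => simp [PowerSeries.coeff_mk]
  | succ k ih =>
    rw [pow_succ, PowerSeries.coeff_mul, Finset.Nat.sum_antidiagonal_eq_sum_range_succ_mk]
    have h : ∀ i ∈ range (m + 1),
        coeff (R := ℤ) i ((mk fun s => a ^ s) ^ (k + 1)) * coeff (R := ℤ) (m - i) (mk fun s => a ^ s)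
          = a ^ m * ((i + k).choose k : ℤ) := by
      intro i hi
      simp only [mem_range] at hi
      rw [ih, PowerSeries.coeff_mk]
      have : a ^ i * a ^ (m - i) = a ^ m := by
        rw [← pow_add]; congr 1; omega
      ring_nf
      rw [this]
    rw [Finset.sum_congr rfl h, ← Finset.mul_sum]
    congr 1
    rw [← Nat.cast_sum, Nat.sum_range_add_choose m k, Nat.add_assoc]

private lemma coeff_one_add_X_pow' (m j : ℕ) :
    PowerSeries.coeff (R := ℤ) j ((1 + PowerSeries.X) ^ m) = (m.choose j : ℤ) := by
  have h : ((1 + PowerSeries.X : ℤ⟦X⟧)) = ((1 + Polynomial.X : Polynomial ℤ) : ℤ⟦X⟧) := by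
    push_cast; ring
  rw [h, ← Polynomial.coe_pow, Polynomial.coeff_coe, Polynomial.coeff_one_add_X_pow]

theorem coeff_formula
    (n k d : ℕ) (hk : 1 ≤ k) (hkn : k ≤ n) (hd : 1 ≤ d) :
    PowerSeries.coeff (R := ℤ) n
        ((1 + PowerSeries.X) ^ (n - 1) *
          (PowerSeries.C (R := ℤ) (d : ℤ) * PowerSeries.X) ^ k *
          (PowerSeries.mk fun s => (-(d : ℤ)) ^ s) ^ k)
      = (-1 : ℤ) ^ (n - k) * (n - 1).choose (k - 1) * (d : ℤ) ^ k *
          ((d : ℤ) - 1) ^ (n - k) := by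
  obtain ⟨K, rfl⟩ : ∃ K, k = K + 1 := ⟨k - 1, by omega⟩
  set m := n - (K + 1) with hm
  have hn1 : n - 1 = m + K := by omega
  have hrw : (1 + PowerSeries.X) ^ (n - 1) *
          (PowerSeries.C (R := ℤ) (d : ℤ) * PowerSeries.X) ^ (K + 1) *
          (PowerSeries.mk fun s => (-(d : ℤ)) ^ s) ^ (K + 1)
      = PowerSeries.C (R := ℤ) ((d : ℤ) ^ (K + 1)) *
          (PowerSeries.X ^ (K + 1) *
            ((1 + PowerSeries.X) ^ (n - 1) *
              (PowerSeries.mk fun s => (-(d : ℤ)) ^ s) ^ (K + 1))) := by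
    rw [mul_pow, ← map_pow]; ring
  rw [hrw, PowerSeries.coeff_C_mul, PowerSeries.coeff_X_pow_mul' _ _ _,
    if_pos (by omega : K + 1 ≤ n)]
  rw [PowerSeries.coeff_mul, Finset.Nat.sum_antidiagonal_eq_sum_range_succ_mk]
  have hnk : n - (K + 1) = m := rfl
  rw [hnk]
  have hterm : ∀ i ∈ range (m + 1),
      coeff (R := ℤ) i ((1 + X) ^ (n - 1)) *
        coeff (R := ℤ) (m - i) ((mk fun s => (-(d : ℤ)) ^ s) ^ (K + 1))
      = ((m + K).choose i : ℤ) * ((-1) ^ (m - i) * (d : ℤ) ^ (m - i) *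
          ((m - i + K).choose K : ℤ)) := by
    intro i hi
    rw [coeff_one_add_X_pow', coeff_geom_pow, hn1, neg_pow]
  rw [Finset.sum_congr rfl hterm]
  have hrhs : ((d : ℤ) - 1) ^ m = ∑ i ∈ range (m + 1),
      (-1 : ℤ) ^ i * (d : ℤ) ^ (m - i) * (m.choose i : ℤ) := by
    rw [show ((d : ℤ) - 1) = (-1 + d) by ring, add_pow]
  rw [hn1, hrhs, Nat.add_sub_cancel, Finset.mul_sum, Finset.mul_sum]
  apply Finset.sum_congr rfl
  intro i hi
  simp only [mem_range] at hi
  have hi' : i ≤ m := by omega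
  have h3 : ((m + K).choose i : ℤ) * ((m - i + K).choose K : ℤ)
      = ((m + K).choose K : ℤ) * (m.choose i : ℤ) := by
    exact_mod_cast congrArg (Nat.cast : ℕ → ℤ) (choose_aux m K i hi')
  have hsign : ((-1 : ℤ)) ^ (m - i) = (-1) ^ m * (-1) ^ i := by
    rw [← pow_add, show m + i = (m - i) + 2 * i by omega, pow_add, pow_mul]
    norm_num
  rw [hsign]
  linear_combination ((d : ℤ) ^ (K + 1) * ((-1 : ℤ) ^ m * (-1) ^ i) * (d : ℤ) ^ (m - i)) * h3
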